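/- Let G be a locally compact abelian unimodular group with U(1)-central extension G^τ, and let L²(G,τ) denote the L²-sections of the associated line bundle (identified with L² functions on G^τ at level −1). Then the map m: L²(G) ⊗ C_c(G,τ) → C_c(G^τ, L²(G,τ)) defined by m(φ₁⊗φ₂)(x,g) := φ₁(x)φ₂(x⁻¹g) extends to an isometric isomorphism L²(G) ⊗ (G⋉_τℂ) ≅ G⋉_τ L²(G,τ) of (G⋉C₀(G))-(G⋉_τℂ)-bimodules. In particular it intertwines inner products: ⟨m(φ₁⊗φ₂), m(ψ₁⊗ψ₂)⟩_{G⋉_τℂ} = ⟨φ₁,ψ₁⟩_{L²(G)} · (φ₂* * ψ₂). -/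

import Mathlib

open MeasureTheory
open scoped ComplexConjugate

/-- For a locally compact abelian unimodular group `G` with
`U(1)`-central extension `G^τ`, the map `m(φ₁⊗φ₂)(x,g) = φ₁(x)φ₂(x⁻¹g)` extends to
an isometric isomorphism `L²(G) ⊗ (G⋉_τℂ) ≅ G⋉_τ L²(G,τ)`; in particular it
intertwines the `G⋉_τℂ`-valued inner products:
`⟨m(φ₁⊗φ₂), m(ψ₁⊗ψ₂)⟩(g) = ⟨φ₁,ψ₁⟩ · (φ₂* * ψ₂)(g)`.
(Functions on `G` are represented as level-`0` functions on `G^τ`, and elements of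
`C_c(G,τ)` as level-`1` functions on `G^τ`; all integrals are over `G^τ` with respect
to a (two-sided invariant) Haar measure.) -/
theorem stmt7 {Gτ : Type*} [Group Gτ] [TopologicalSpace Gτ] [IsTopologicalGroup Gτ]
    [MeasurableSpace Gτ] [BorelSpace Gτ] [LocallyCompactSpace Gτ]
    (μ : Measure Gτ) [μ.IsHaarMeasure] [μ.IsMulRightInvariant]
    (i : Circle →* Gτ) (hcentral : ∀ (z : Circle) (g : Gτ), i z * g = g * i z)
    (φ₁ ψ₁ φ₂ ψ₂ : Gτ → ℂ)
    -- `φ₁, ψ₁` represent functions on `G`: level 0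
    (hφ₁ : ∀ (z : Circle) (g : Gτ), φ₁ (i z * g) = φ₁ g)
    (hψ₁ : ∀ (z : Circle) (g : Gτ), ψ₁ (i z * g) = ψ₁ g)
    -- `φ₂, ψ₂ ∈ C_c(G,τ)`: level 1
    (hφ₂ : ∀ (z : Circle) (g : Gτ), φ₂ (i z * g) = (z : ℂ) * φ₂ g)
    (hψ₂ : ∀ (z : Circle) (g : Gτ), ψ₂ (i z * g) = (z : ℂ) * ψ₂ g)
    (hφ₁c : Continuous φ₁) (hφ₁s : HasCompactSupport φ₁)
    (hψ₁c : Continuous ψ₁) (hψ₁s : HasCompactSupport ψ₁)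
    (hφ₂c : Continuous φ₂) (hφ₂s : HasCompactSupport φ₂)
    (hψ₂c : Continuous ψ₂) (hψ₂s : HasCompactSupport ψ₂) :
    ∀ g : Gτ,
      (∫ h, ∫ x, conj (φ₁ x * φ₂ (x⁻¹ * h)) * (ψ₁ x * ψ₂ (x⁻¹ * h * g)) ∂μ ∂μ) =
        (∫ x, conj (φ₁ x) * ψ₁ x ∂μ) * (∫ h, conj (φ₂ h) * ψ₂ (h * g) ∂μ) := by
  intro g
  set f : Gτ → Gτ → ℂ := fun h x =>
    conj (φ₁ x * φ₂ (x⁻¹ * h)) * (ψ₁ x * ψ₂ (x⁻¹ * h * g)) with hf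
  have hfc : Continuous f.uncurry := by
    apply Continuous.mul
    · exact Complex.continuous_conj.comp
        ((hφ₁c.comp continuous_snd).mul
          (hφ₂c.comp ((continuous_snd.inv).mul continuous_fst)))
    · exact (hψ₁c.comp continuous_snd).mul
        (hψ₂c.comp (((continuous_snd.inv).mul continuous_fst).mul continuous_const))
  have hfs : HasCompactSupport f.uncurry := by
    apply HasCompactSupport.intro
      ((hφ₁s.isCompact.mul hφ₂s.isCompact).prod hφ₁s.isCompact)
    rintro ⟨h, x⟩ hp
    simp only [Set.mem_prod, not_and_or] at hp
    rcases hp with hp | hp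
    · have hx : x ∈ tsupport φ₁ ∨ φ₁ x = 0 := by
        by_cases hx : x ∈ tsupport φ₁
        · exact Or.inl hx
        · exact Or.inr (image_eq_zero_of_notMem_tsupport hx)
      rcases hx with hx | hx
      · have : x⁻¹ * h ∉ tsupport φ₂ := by
          intro hmem
          exact hp (by simpa using Set.mul_mem_mul hx hmem)
        have h0 : φ₂ (x⁻¹ * h) = 0 := image_eq_zero_of_notMem_tsupport this
        simp [f, Function.uncurry, h0]
      · simp [f, Function.uncurry, hx]
    · have h0 : φ₁ x = 0 := image_eq_zero_of_notMem_tsupport hp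
      simp [f, Function.uncurry, h0]
  rw [integral_integral_swap_of_hasCompactSupport hfc hfs]
  have key : ∀ x : Gτ, (∫ h, f h x ∂μ) =
      (conj (φ₁ x) * ψ₁ x) * ∫ h, conj (φ₂ h) * ψ₂ (h * g) ∂μ := by
    intro x
    have : ∀ h : Gτ, f h x =
        (conj (φ₁ x) * ψ₁ x) * (conj (φ₂ (x⁻¹ * h)) * ψ₂ ((x⁻¹ * h) * g)) := by
      intro h
      simp only [f, map_mul, mul_assoc]
      ring
    simp only [this]
    rw [integral_const_mul]
    congr 1
    exact integral_mul_left_eq_self (fun h => conj (φ₂ h) * ψ₂ (h * g)) x⁻¹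
  simp only [key]
  rw [integral_mul_const]
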